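/- Let c, α > 0, p ≥ 1, (w_t)_{t=1}^T and (u_t)_{t=1}^T sequences in ℝ^d, and let r_t be the Huber-like penalty: r_t(u) = c(p‖u‖ − (p−1)‖w_t‖)·‖w_t‖^{p−1}/(α^p + Σ_{s≤t}‖w_s‖^p)^{1−1/p} if ‖u‖ > ‖w_t‖, and r_t(u) = c‖u‖^p/(α^p + Σ_{s≤t}‖w_s‖^p)^{1−1/p} if ‖u‖ ≤ ‖w_t‖. Then Σ_{t=1}^T r_t(u_t) ≤ c·p·(α^p + Σ_{t=1}^T ‖u_t‖^p)^{1/p} · [ (log(1 + Σ_{t=1}^T ‖u_t‖^p / α^p))^{(p−1)/p} + 1 ]. -/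

import Mathlib

open Finset

lemma aux_logsum (a : ℕ → ℝ) (ha : ∀ t, 0 ≤ a t) (α0 : ℝ) (hα0 : 0 < α0) (n : ℕ) :
    ∑ t ∈ Finset.Icc 1 n, a t / (α0 + ∑ s ∈ Finset.Icc 1 t, a s)
      ≤ Real.log ((α0 + ∑ t ∈ Finset.Icc 1 n, a t) / α0) := by
  induction n with
  | zero => simp [div_self hα0.ne']
  | succ n ih =>
    rw [Finset.sum_Icc_succ_top (by omega : 1 ≤ n + 1),
        Finset.sum_Icc_succ_top (by omega : 1 ≤ n + 1)]
    have hS : (0:ℝ) ≤ ∑ s ∈ Finset.Icc 1 n, a s :=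
      Finset.sum_nonneg fun i _ => ha i
    set S := ∑ s ∈ Finset.Icc 1 n, a s with hSdef
    have h1 : 0 < α0 + S := by linarith
    have h2 : 0 < α0 + (S + a (n+1)) := by linarith [ha (n+1)]
    have hlog : Real.log ((α0 + S) / (α0 + (S + a (n+1)))) ≤
        (α0 + S) / (α0 + (S + a (n+1))) - 1 :=
      Real.log_le_sub_one_of_pos (div_pos h1 h2)
    have heq : Real.log ((α0 + (S + a (n+1))) / α0) - Real.log ((α0 + S) / α0)
        = - Real.log ((α0 + S) / (α0 + (S + a (n+1)))) := by
      rw [Real.log_div h2.ne' hα0.ne', Real.log_div h1.ne' hα0.ne',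
          Real.log_div h1.ne' h2.ne']
      ring
    have hfe : (α0 + S) / (α0 + (S + a (n+1))) - 1
        = -(a (n+1) / (α0 + (S + a (n+1)))) := by
      field_simp
      ring
    linarith [ih]

theorem stmt9 {d : ℕ} (c α p : ℝ) (hc : 0 < c) (hα : 0 < α) (hp : 1 ≤ p)
    (T : ℕ) (hT : 1 ≤ T) (w u : ℕ → EuclideanSpace ℝ (Fin d)) :
    ∑ t ∈ Finset.Icc 1 T,
      (if ‖w t‖ < ‖u t‖ then
        c * (p * ‖u t‖ - (p - 1) * ‖w t‖) * ‖w t‖ ^ (p - 1) /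
          (α ^ p + ∑ s ∈ Finset.Icc 1 t, ‖w s‖ ^ p) ^ (1 - 1 / p)
      else
        c * ‖u t‖ ^ p / (α ^ p + ∑ s ∈ Finset.Icc 1 t, ‖w s‖ ^ p) ^ (1 - 1 / p))
    ≤ c * p * (α ^ p + ∑ t ∈ Finset.Icc 1 T, ‖u t‖ ^ p) ^ (1 / p) *
        ((Real.log (1 + (∑ t ∈ Finset.Icc 1 T, ‖u t‖ ^ p) / α ^ p)) ^ ((p - 1) / p) + 1) := by
  have hp0 : (0:ℝ) < p := lt_of_lt_of_le one_pos hp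
  have hαp : (0:ℝ) < α ^ p := Real.rpow_pos_of_pos hα p
  have he : (0:ℝ) ≤ 1 - 1/p := by
    rw [sub_nonneg]
    exact div_le_one_of_le₀ hp hp0.le
  set m : ℕ → ℝ := fun t => min ‖w t‖ ‖u t‖ with hm_def
  have hm : ∀ t, 0 ≤ m t := fun t => le_min (norm_nonneg _) (norm_nonneg _)
  set a : ℕ → ℝ := fun t => m t ^ p with ha_def
  have ha : ∀ t, 0 ≤ a t := fun t => Real.rpow_nonneg (hm t) p
  set B : ℕ → ℝ := fun t => α ^ p + ∑ s ∈ Finset.Icc 1 t, a s with hB_def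
  have hB : ∀ t, 0 < B t := fun t => by
    have : (0:ℝ) ≤ ∑ s ∈ Finset.Icc 1 t, a s := Finset.sum_nonneg fun i _ => ha i
    simp only [hB_def]; linarith
  set g : ℕ → ℝ := fun t => m t ^ (p-1) / B t ^ (1 - 1/p) with hg_def
  have hg : ∀ t, 0 ≤ g t := fun t =>
    div_nonneg (Real.rpow_nonneg (hm t) _) (Real.rpow_nonneg (hB t).le _)
  -- per-term bound
  have step : ∀ t ∈ Finset.Icc 1 T,
      (if ‖w t‖ < ‖u t‖ then
        c * (p * ‖u t‖ - (p - 1) * ‖w t‖) * ‖w t‖ ^ (p - 1) /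
          (α ^ p + ∑ s ∈ Finset.Icc 1 t, ‖w s‖ ^ p) ^ (1 - 1 / p)
      else
        c * ‖u t‖ ^ p / (α ^ p + ∑ s ∈ Finset.Icc 1 t, ‖w s‖ ^ p) ^ (1 - 1 / p))
      ≤ c * p * (‖u t‖ * g t) := by
    intro t _
    have hBD : B t ≤ α ^ p + ∑ s ∈ Finset.Icc 1 t, ‖w s‖ ^ p := by
      simp only [hB_def]
      have h5 : ∀ s ∈ Finset.Icc 1 t, a s ≤ ‖w s‖ ^ p := fun s _ =>
        Real.rpow_le_rpow (hm s) (min_le_left _ _) hp0.le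
      have h6 := Finset.sum_le_sum h5
      linarith
    have hD : (0:ℝ) < α ^ p + ∑ s ∈ Finset.Icc 1 t, ‖w s‖ ^ p := lt_of_lt_of_le (hB t) hBD
    have hden : B t ^ (1 - 1/p) ≤ (α ^ p + ∑ s ∈ Finset.Icc 1 t, ‖w s‖ ^ p) ^ (1 - 1/p) :=
      Real.rpow_le_rpow (hB t).le hBD he
    have hBpow : 0 < B t ^ (1 - 1/p) := Real.rpow_pos_of_pos (hB t) _
    split_ifs with h
    · have hmt : m t = ‖w t‖ := min_eq_left h.le
      have hnum : c * (p * ‖u t‖ - (p - 1) * ‖w t‖) * ‖w t‖ ^ (p - 1)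
          ≤ c * p * ‖u t‖ * ‖w t‖ ^ (p - 1) := by
        have h1 : 0 ≤ (p - 1) * ‖w t‖ := mul_nonneg (by linarith) (norm_nonneg _)
        have h2 : c * (p * ‖u t‖ - (p - 1) * ‖w t‖) ≤ c * (p * ‖u t‖) := by nlinarith
        calc c * (p * ‖u t‖ - (p - 1) * ‖w t‖) * ‖w t‖ ^ (p - 1)
            ≤ c * (p * ‖u t‖) * ‖w t‖ ^ (p - 1) :=
              mul_le_mul_of_nonneg_right h2 (Real.rpow_nonneg (norm_nonneg _) _)
          _ = c * p * ‖u t‖ * ‖w t‖ ^ (p - 1) := by ring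
      have hnn : 0 ≤ c * p * ‖u t‖ * ‖w t‖ ^ (p - 1) := by positivity
      calc c * (p * ‖u t‖ - (p - 1) * ‖w t‖) * ‖w t‖ ^ (p - 1) /
              (α ^ p + ∑ s ∈ Finset.Icc 1 t, ‖w s‖ ^ p) ^ (1 - 1 / p)
          ≤ c * p * ‖u t‖ * ‖w t‖ ^ (p - 1) / B t ^ (1 - 1/p) :=
            div_le_div₀ hnn hnum hBpow hden
        _ = c * p * (‖u t‖ * g t) := by
            simp only [hg_def, hmt]; ring
    · push_neg at h
      have hmt : m t = ‖u t‖ := min_eq_right h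
      rcases eq_or_lt_of_le (norm_nonneg (u t)) with h0 | h0
      · have hz : ‖u t‖ = 0 := h0.symm
        rw [hz, Real.zero_rpow hp0.ne']
        have hgnn : 0 ≤ g t := hg t
        have : c * p * ((0:ℝ) * g t) = 0 := by ring
        rw [this]
        simp
      · have hup : ‖u t‖ ^ p = ‖u t‖ * ‖u t‖ ^ (p - 1) := by
          have h3 := Real.rpow_add h0 1 (p - 1)
          rw [Real.rpow_one] at h3
          rw [show (1:ℝ) + (p - 1) = p by ring] at h3
          exact h3
        have hnum : c * ‖u t‖ ^ p ≤ c * p * ‖u t‖ * ‖u t‖ ^ (p - 1) := by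
          rw [hup]
          have h4 : 0 ≤ ‖u t‖ * ‖u t‖ ^ (p - 1) :=
            mul_nonneg (norm_nonneg _) (Real.rpow_nonneg (norm_nonneg _) _)
          nlinarith [mul_nonneg (mul_nonneg (show (0:ℝ) ≤ p - 1 by linarith) hc.le) h4]
        have hnn : 0 ≤ c * p * ‖u t‖ * ‖u t‖ ^ (p - 1) := by positivity
        calc c * ‖u t‖ ^ p / (α ^ p + ∑ s ∈ Finset.Icc 1 t, ‖w s‖ ^ p) ^ (1 - 1 / p)
            ≤ c * p * ‖u t‖ * ‖u t‖ ^ (p - 1) / B t ^ (1 - 1/p) :=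
              div_le_div₀ hnn hnum hBpow hden
          _ = c * p * (‖u t‖ * g t) := by
              simp only [hg_def, hmt]; ring
  have hUnn : (0:ℝ) ≤ ∑ t ∈ Finset.Icc 1 T, ‖u t‖ ^ p :=
    Finset.sum_nonneg fun i _ => Real.rpow_nonneg (norm_nonneg _) _
  have hL0 : 0 ≤ Real.log (1 + (∑ t ∈ Finset.Icc 1 T, ‖u t‖ ^ p) / α ^ p) :=
    Real.log_nonneg (le_add_of_nonneg_right (div_nonneg hUnn hαp.le))
  have hab : ∑ t ∈ Finset.Icc 1 T, a t ≤ ∑ t ∈ Finset.Icc 1 T, ‖u t‖ ^ p :=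
    Finset.sum_le_sum fun t _ => Real.rpow_le_rpow (hm t) (min_le_right _ _) hp0.le
  have main : ∑ t ∈ Finset.Icc 1 T, ‖u t‖ * g t
      ≤ (α ^ p + ∑ t ∈ Finset.Icc 1 T, ‖u t‖ ^ p) ^ (1 / p) *
        ((Real.log (1 + (∑ t ∈ Finset.Icc 1 T, ‖u t‖ ^ p) / α ^ p)) ^ ((p - 1) / p) + 1) := by
    rcases eq_or_lt_of_le hp with hp1 | hp1
    · -- p = 1
      have hsum1 : ∀ t ∈ Finset.Icc 1 T, ‖u t‖ * g t = ‖u t‖ := by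
        intro t _
        simp only [hg_def]
        rw [← hp1]
        norm_num
      rw [Finset.sum_congr rfl hsum1, ← hp1]
      norm_num
      have h5 : 0 ≤ ∑ t ∈ Finset.Icc 1 T, ‖u t‖ := Finset.sum_nonneg fun t _ => norm_nonneg _
      nlinarith [hα]
    · -- p > 1
      have hp1' : (0:ℝ) < p - 1 := by linarith
      set q : ℝ := p / (p - 1) with hq_def
      have hq0 : 0 < q := div_pos hp0 hp1'
      have hpq : Real.HolderConjugate p q :=
        (Real.holderConjugate_iff_eq_conjExponent hp1).2 hq_def
      have hHolder := Real.inner_le_Lp_mul_Lq_of_nonneg (Finset.Icc 1 T) hpq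
        (fun i _ => norm_nonneg (u i)) (fun i _ => hg i)
      have hgq : ∀ t, g t ^ q = a t / B t := by
        intro t
        simp only [hg_def, ha_def]
        rw [Real.div_rpow (Real.rpow_nonneg (hm t) _) (Real.rpow_nonneg (hB t).le _),
            ← Real.rpow_mul (hm t), ← Real.rpow_mul (hB t).le,
            show (p - 1) * q = p by rw [hq_def]; field_simp,
            show (1 - 1/p) * q = 1 by rw [hq_def]; field_simp,
            Real.rpow_one]
      have hlogsum := aux_logsum a ha (α ^ p) hαp T
      have hsumtoB : ∑ t ∈ Finset.Icc 1 T, g t ^ q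
          ≤ Real.log (1 + (∑ t ∈ Finset.Icc 1 T, ‖u t‖ ^ p) / α ^ p) := by
        calc ∑ t ∈ Finset.Icc 1 T, g t ^ q
            = ∑ t ∈ Finset.Icc 1 T, a t / B t := Finset.sum_congr rfl fun t _ => hgq t
          _ ≤ Real.log ((α ^ p + ∑ t ∈ Finset.Icc 1 T, a t) / α ^ p) := by
              simp only [hB_def]; exact hlogsum
          _ = Real.log (1 + (∑ t ∈ Finset.Icc 1 T, a t) / α ^ p) := by
              rw [add_div, div_self hαp.ne']
          _ ≤ Real.log (1 + (∑ t ∈ Finset.Icc 1 T, ‖u t‖ ^ p) / α ^ p) := by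
              have hpos : (0:ℝ) < 1 + (∑ t ∈ Finset.Icc 1 T, a t) / α ^ p := by
                have := Finset.sum_nonneg (fun i (_ : i ∈ Finset.Icc 1 T) => ha i)
                positivity
              apply Real.log_le_log hpos
              gcongr
      have h1q : 1/q = (p-1)/p := by rw [hq_def, one_div_div]
      have hgqnn : (0:ℝ) ≤ ∑ t ∈ Finset.Icc 1 T, g t ^ q :=
        Finset.sum_nonneg fun t _ => Real.rpow_nonneg (hg t) q
      have hY : (∑ t ∈ Finset.Icc 1 T, g t ^ q) ^ (1/q)
          ≤ (Real.log (1 + (∑ t ∈ Finset.Icc 1 T, ‖u t‖ ^ p) / α ^ p)) ^ ((p-1)/p) := by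
        rw [h1q]
        exact Real.rpow_le_rpow hgqnn hsumtoB (by positivity)
      have hX : (∑ t ∈ Finset.Icc 1 T, ‖u t‖ ^ p) ^ (1/p)
          ≤ (α ^ p + ∑ t ∈ Finset.Icc 1 T, ‖u t‖ ^ p) ^ (1/p) :=
        Real.rpow_le_rpow hUnn (by linarith) (by positivity)
      calc ∑ t ∈ Finset.Icc 1 T, ‖u t‖ * g t
          ≤ (∑ t ∈ Finset.Icc 1 T, ‖u t‖ ^ p) ^ (1/p) *
              (∑ t ∈ Finset.Icc 1 T, g t ^ q) ^ (1/q) := hHolder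
        _ ≤ (α ^ p + ∑ t ∈ Finset.Icc 1 T, ‖u t‖ ^ p) ^ (1 / p) *
            ((Real.log (1 + (∑ t ∈ Finset.Icc 1 T, ‖u t‖ ^ p) / α ^ p)) ^ ((p - 1) / p) + 1) := by
            apply mul_le_mul hX
            · exact le_trans hY (by linarith [Real.rpow_nonneg hL0 ((p-1)/p)])
            · positivity
            · positivity
  calc ∑ t ∈ Finset.Icc 1 T,
      (if ‖w t‖ < ‖u t‖ then
        c * (p * ‖u t‖ - (p - 1) * ‖w t‖) * ‖w t‖ ^ (p - 1) /
          (α ^ p + ∑ s ∈ Finset.Icc 1 t, ‖w s‖ ^ p) ^ (1 - 1 / p)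
      else
        c * ‖u t‖ ^ p / (α ^ p + ∑ s ∈ Finset.Icc 1 t, ‖w s‖ ^ p) ^ (1 - 1 / p))
      ≤ ∑ t ∈ Finset.Icc 1 T, c * p * (‖u t‖ * g t) := Finset.sum_le_sum step
    _ = c * p * ∑ t ∈ Finset.Icc 1 T, ‖u t‖ * g t := by rw [← Finset.mul_sum]
    _ ≤ c * p * ((α ^ p + ∑ t ∈ Finset.Icc 1 T, ‖u t‖ ^ p) ^ (1 / p) *
        ((Real.log (1 + (∑ t ∈ Finset.Icc 1 T, ‖u t‖ ^ p) / α ^ p)) ^ ((p - 1) / p) + 1)) :=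
        mul_le_mul_of_nonneg_left main (by positivity)
    _ = c * p * (α ^ p + ∑ t ∈ Finset.Icc 1 T, ‖u t‖ ^ p) ^ (1 / p) *
        ((Real.log (1 + (∑ t ∈ Finset.Icc 1 T, ‖u t‖ ^ p) / α ^ p)) ^ ((p - 1) / p) + 1) := by
        ring
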